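/- Let p > q ≥ 1 and n = p + q + 1, k > 0, c = kn. Then the system of equations y^n - x^n = n(y - x) and y^{p+1}/(p+1) - x^{p+1}/(p+1) = y^{q+1}/(q+1) - x^{q+1}/(q+1) has no solution (x,y) with 0 < x < 1 < y. -/

import Mathlib

open Real Set Filter Topology

lemma lemA : ∀ w : ℝ, 0 < w → Real.sinh w < w * Real.cosh w := by
  have h : StrictMonoOn (fun w : ℝ => w * Real.cosh w - Real.sinh w) (Ici 0) := by
    apply strictMonoOn_of_deriv_pos (convex_Ici 0)
    · exact ((continuous_id.mul Real.continuous_cosh).sub Real.continuous_sinh).continuousOn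
    · intro w hw
      rw [interior_Ici] at hw
      have hd : HasDerivAt (fun w : ℝ => w * Real.cosh w - Real.sinh w) (w * Real.sinh w) w := by
        have := ((hasDerivAt_id w).mul (Real.hasDerivAt_cosh w)).sub (Real.hasDerivAt_sinh w)
        refine this.congr_deriv ?_
        simp only [id_eq]
        ring
      rw [hd.deriv]
      exact mul_pos hw (Real.sinh_pos_iff.2 hw)
  intro w hw
  have := h (self_mem_Ici) (le_of_lt hw : (0:ℝ) ≤ w) hw
  simpa using this

lemma lemB : ∀ w : ℝ, 0 < w → 3 * Real.sinh w * Real.cosh w < w * (2 * Real.cosh w ^ 2 + 1) := by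
  have h : StrictMonoOn (fun w : ℝ => w * (2 * Real.cosh w ^ 2 + 1) - 3 * Real.sinh w * Real.cosh w) (Ici 0) := by
    apply strictMonoOn_of_deriv_pos (convex_Ici 0)
    · fun_prop
    · intro w hw
      rw [interior_Ici] at hw
      have hd : HasDerivAt (fun w : ℝ => w * (2 * Real.cosh w ^ 2 + 1) - 3 * Real.sinh w * Real.cosh w)
          (4 * Real.sinh w * (w * Real.cosh w - Real.sinh w)) w := by
        have h1 : HasDerivAt (fun w : ℝ => w * (2 * Real.cosh w ^ 2 + 1))
            (1 * (2 * Real.cosh w ^ 2 + 1) + w * (2 * (2 * Real.cosh w ^ 1 * Real.sinh w))) w := by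
          exact (hasDerivAt_id w).mul ((((Real.hasDerivAt_cosh w).pow 2).const_mul 2).add_const 1)
        have h2 : HasDerivAt (fun w : ℝ => 3 * Real.sinh w * Real.cosh w)
            (3 * Real.cosh w * Real.cosh w + 3 * Real.sinh w * Real.sinh w) w := by
          exact ((Real.hasDerivAt_sinh w).const_mul 3).mul (Real.hasDerivAt_cosh w)
        have := h1.sub h2
        refine this.congr_deriv ?_
        have hc := Real.cosh_sq w
        nlinarith [Real.cosh_sq w]
      rw [hd.deriv]
      have h1 := Real.sinh_pos_iff.2 hw
      have h2 := lemA w hw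
      nlinarith
  intro w hw
  have := h (self_mem_Ici) (le_of_lt hw : (0:ℝ) ≤ w) hw
  simp only [Real.cosh_zero, Real.sinh_zero] at this
  nlinarith [this]

lemma lazarevic : ∀ w : ℝ, 0 < w → w ^ 3 * Real.cosh w < Real.sinh w ^ 3 := by
  set f : ℝ → ℝ := fun w => 3 * Real.log (Real.sinh w) - 3 * Real.log w - Real.log (Real.cosh w) with hf
  have hmono : StrictMonoOn f (Ioi 0) := by
    apply strictMonoOn_of_deriv_pos (convex_Ioi 0)
    · apply ContinuousOn.sub
      apply ContinuousOn.sub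
      · exact (Real.continuousOn_log.comp Real.continuous_sinh.continuousOn
          (fun w hw => (Real.sinh_pos_iff.2 hw).ne')).const_smul 3 |>.congr (fun w hw => by simp [smul_eq_mul])
      · exact (Real.continuousOn_log.mono (fun w hw => (ne_of_gt hw))).const_smul 3 |>.congr (fun w hw => by simp [smul_eq_mul])
      · exact Real.continuousOn_log.comp Real.continuous_cosh.continuousOn
          (fun w _ => (Real.cosh_pos w).ne')
    · intro w hw
      rw [interior_Ioi] at hw
      have hw' : (0:ℝ) < w := hw
      have hs := Real.sinh_pos_iff.2 hw'
      have hc := Real.cosh_pos w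
      have hd : HasDerivAt f (3 * (Real.cosh w / Real.sinh w) - 3 * w⁻¹ - Real.sinh w / Real.cosh w) w := by
        have h1 : HasDerivAt (fun w : ℝ => Real.log (Real.sinh w)) (Real.cosh w / Real.sinh w) w := by
          simpa using (Real.hasDerivAt_sinh w).log hs.ne'
        have h2 : HasDerivAt (fun w : ℝ => Real.log (Real.cosh w)) (Real.sinh w / Real.cosh w) w := by
          simpa using (Real.hasDerivAt_cosh w).log hc.ne'
        have h3 : HasDerivAt Real.log w⁻¹ w := Real.hasDerivAt_log hw.ne'
        exact ((h1.const_mul 3).sub (h3.const_mul 3)).sub h2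
      rw [hd.deriv]
      have key : 3 * (Real.cosh w / Real.sinh w) - 3 * w⁻¹ - Real.sinh w / Real.cosh w
          = (w * (2 * Real.cosh w ^ 2 + 1) - 3 * Real.sinh w * Real.cosh w) / (w * Real.sinh w * Real.cosh w) := by
        rw [eq_div_iff (by positivity : (w * Real.sinh w * Real.cosh w) ≠ 0)]
        field_simp
        linear_combination w * (Real.cosh_sq w)
      rw [key]
      exact div_pos (by nlinarith [lemB w hw']) (by positivity)
  have hlim : Tendsto f (𝓝[>] (0:ℝ)) (𝓝 0) := by
    have hslope : Tendsto (fun w : ℝ => Real.sinh w / w) (𝓝[>] (0:ℝ)) (𝓝 1) := by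
      have h := (Real.hasDerivAt_sinh 0)
      rw [hasDerivAt_iff_tendsto_slope] at h
      have h2 : Tendsto (slope Real.sinh 0) (𝓝[>] (0:ℝ)) (𝓝 (Real.cosh 0)) :=
        h.mono_left (nhdsWithin_mono 0 (fun x hx => ne_of_gt hx))
      rw [Real.cosh_zero] at h2
      refine h2.congr' ?_
      filter_upwards [self_mem_nhdsWithin] with u hu
      rw [slope_def_field, Real.sinh_zero]
      rw [sub_zero, sub_zero]
    have hlog1 : Tendsto (fun w : ℝ => Real.log (Real.sinh w / w)) (𝓝[>] (0:ℝ)) (𝓝 0) := by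
      have := (Real.continuousAt_log one_ne_zero).tendsto.comp hslope
      simpa [Function.comp_def] using this
    have hlog2 : Tendsto (fun w : ℝ => Real.log (Real.cosh w)) (𝓝[>] (0:ℝ)) (𝓝 0) := by
      have : ContinuousAt (fun w : ℝ => Real.log (Real.cosh w)) 0 := by
        exact (Real.continuousAt_log (by positivity)).comp Real.continuous_cosh.continuousAt
      have ht := this.tendsto
      rw [Real.cosh_zero, Real.log_one] at ht
      exact ht.mono_left nhdsWithin_le_nhds
    have heq : ∀ᶠ w in 𝓝[>] (0:ℝ), 3 * Real.log (Real.sinh w / w) - Real.log (Real.cosh w) = f w := by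
      filter_upwards [self_mem_nhdsWithin] with w hw
      have hw' : (0:ℝ) < w := hw
      rw [Real.log_div (Real.sinh_pos_iff.2 hw').ne' hw'.ne']
      ring
    have := ((hlog1.const_mul 3).sub hlog2)
    simp only [mul_zero, sub_zero] at this
    exact Tendsto.congr' heq this
  have hpos : ∀ w : ℝ, 0 < w → 0 < f w := by
    intro w hw
    have h1 : f (w/2) < f w := hmono (by simpa using half_pos hw) hw (by linarith)
    have h2 : (0:ℝ) ≤ f (w/2) := by
      apply le_of_tendsto hlim
      filter_upwards [Ioo_mem_nhdsGT_of_mem (⟨le_refl 0, half_pos hw⟩ : (0:ℝ) ∈ Ico 0 (w/2))] with u hu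
      exact le_of_lt (hmono hu.1 (by simpa using half_pos hw) hu.2)
    exact lt_of_le_of_lt h2 h1
  intro w hw
  have h := hpos w hw
  have hs := Real.sinh_pos_iff.2 hw
  have hc := Real.cosh_pos w
  rw [← Real.log_lt_log_iff (by positivity) (by positivity)]
  have e1 : Real.log (w ^ 3 * Real.cosh w) = 3 * Real.log w + Real.log (Real.cosh w) := by
    rw [Real.log_mul (by positivity) hc.ne', Real.log_pow]
    norm_num
  have e2 : Real.log (Real.sinh w ^ 3) = 3 * Real.log (Real.sinh w) := by
    rw [Real.log_pow]; norm_num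
  rw [e1, e2]
  simp only [hf] at h
  linarith

lemma M_anti : StrictAntiOn (fun w : ℝ => (w ^ 2)⁻¹ - (Real.sinh w ^ 2)⁻¹) (Ioi 0) := by
  apply strictAntiOn_of_deriv_neg (convex_Ioi 0)
  · apply ContinuousOn.sub
    · exact ContinuousOn.inv₀ (continuous_pow 2).continuousOn
        (fun w hw => by have : (0:ℝ) < w := hw; positivity)
    · exact ContinuousOn.inv₀ (Real.continuous_sinh.pow 2).continuousOn
        (fun w hw => by have := Real.sinh_pos_iff.2 (show (0:ℝ) < w from hw); positivity)
  · intro w hw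
    rw [interior_Ioi] at hw
    have hw' : (0:ℝ) < w := hw
    have hs := Real.sinh_pos_iff.2 hw'
    have hd : HasDerivAt (fun w : ℝ => (w ^ 2)⁻¹ - (Real.sinh w ^ 2)⁻¹)
        (-(2 * w ^ 1) / (w ^ 2) ^ 2 - -(2 * Real.sinh w ^ 1 * Real.cosh w) / (Real.sinh w ^ 2) ^ 2) w := by
      exact ((hasDerivAt_pow 2 w).inv (pow_ne_zero 2 hw'.ne')).sub
        (((Real.hasDerivAt_sinh w).pow 2).inv (pow_ne_zero 2 hs.ne'))
    rw [hd.deriv]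
    have hc := Real.cosh_pos w
    have hlaz := lazarevic w hw'
    have key : -(2 * w ^ 1) / (w ^ 2) ^ 2 - -(2 * Real.sinh w ^ 1 * Real.cosh w) / (Real.sinh w ^ 2) ^ 2
        = 2 * (w ^ 3 * Real.cosh w - Real.sinh w ^ 3) / (w ^ 3 * Real.sinh w ^ 3) := by
      field_simp
      ring
    rw [key]
    apply div_neg_of_neg_of_pos (by linarith) (by positivity)



theorem no_solution_critical_case (p q n k c : ℝ) (hq : 1 ≤ q) (hpq : q < p)
    (hn : n = p + q + 1) (hk : 0 < k) (hc : c = k * n) :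
    ¬ ∃ x y : ℝ, 0 < x ∧ x < 1 ∧ 1 < y ∧
      y ^ n - x ^ n = (c / k) * (y - x) ∧
      y ^ (p + 1) / (p + 1) - x ^ (p + 1) / (p + 1) =
        y ^ (q + 1) / (q + 1) - x ^ (q + 1) / (q + 1) := by
  rintro ⟨x, y, hx0, hx1, hy1, e1, e2⟩
  have hy0 : (0:ℝ) < y := lt_trans one_pos hy1
  set X := Real.log x with hXdef
  set Y := Real.log y with hYdef
  set L := Y - X with hLdef
  have hX : X < 0 := Real.log_neg hx0 hx1
  have hY : 0 < Y := Real.log_pos hy1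
  have hL : 0 < L := by rw [hLdef]; linarith
  set A : ℝ → ℝ := fun m => X * m + Real.log (Real.exp (L * m) - 1) - Real.log m with hAdef
  have hexp1 : ∀ m : ℝ, 0 < m → 1 < Real.exp (L * m) := fun m hm =>
    Real.one_lt_exp_iff.2 (by positivity)
  have key : ∀ m : ℝ, 0 < m → Real.exp (A m) = (y ^ m - x ^ m) / m := by
    intro m hm
    have h1 : (0:ℝ) < Real.exp (L * m) - 1 := by linarith [hexp1 m hm]
    have hxm : x ^ m = Real.exp (X * m) := by rw [Real.rpow_def_of_pos hx0]
    have hym : y ^ m = Real.exp (X * m) * Real.exp (L * m) := by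
      rw [Real.rpow_def_of_pos hy0, ← Real.exp_add]
      congr 1
      rw [hLdef]; ring
    rw [hAdef]
    simp only
    rw [Real.exp_sub, Real.exp_add, Real.exp_log h1, Real.exp_log hm, hxm, hym]
    ring
  have hn0 : (0:ℝ) < n := by rw [hn]; linarith
  have hck : c / k = n := by rw [hc]; field_simp
  have cond1 : A n = A 1 := by
    apply Real.exp_injective
    have h1 : Real.exp (A n) = y - x := by
      rw [key n hn0, e1, hck]
      field_simp
    have h2 : Real.exp (A 1) = y - x := by
      rw [key 1 one_pos, Real.rpow_one, Real.rpow_one, div_one]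
    rw [h1, h2]
  have hp0 : (0:ℝ) < p + 1 := by linarith
  have hq0 : (0:ℝ) < q + 1 := by linarith
  have cond2 : A (p + 1) = A (q + 1) := by
    apply Real.exp_injective
    rw [key _ hp0, key _ hq0, ← div_sub_div_same, ← div_sub_div_same]
    exact e2
  -- derivative data
  set A1 : ℝ → ℝ := fun m => X + L * Real.exp (L * m) / (Real.exp (L * m) - 1) - m⁻¹ with hA1def
  set A2 : ℝ → ℝ := fun m => (m ^ 2)⁻¹ - L ^ 2 * Real.exp (L * m) / (Real.exp (L * m) - 1) ^ 2
    with hA2def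
  have hexpDer : ∀ m : ℝ, HasDerivAt (fun m : ℝ => Real.exp (L * m)) (Real.exp (L * m) * L) m := by
    intro m
    have h := ((hasDerivAt_id m).const_mul L).exp
    simpa only [id_eq, mul_one] using h
  have hA : ∀ m : ℝ, 0 < m → HasDerivAt A (A1 m) m := by
    intro m hm
    have h1 : (0:ℝ) < Real.exp (L * m) - 1 := by linarith [hexp1 m hm]
    have hinner : HasDerivAt (fun m : ℝ => Real.exp (L * m) - 1) (Real.exp (L * m) * L) m :=
      (hexpDer m).sub_const 1
    have hlog := hinner.log h1.ne'
    have hXm : HasDerivAt (fun m : ℝ => X * m) X m := by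
      simpa using (hasDerivAt_id m).const_mul X
    have h := (hXm.add hlog).sub (Real.hasDerivAt_log hm.ne')
    refine h.congr_deriv ?_
    simp only [hA1def]
    ring
  have hA1' : ∀ m : ℝ, 0 < m → HasDerivAt A1 (A2 m) m := by
    intro m hm
    have h1 : (0:ℝ) < Real.exp (L * m) - 1 := by linarith [hexp1 m hm]
    have hnum : HasDerivAt (fun m : ℝ => L * Real.exp (L * m)) (L * (Real.exp (L * m) * L)) m :=
      (hexpDer m).const_mul L
    have hden : HasDerivAt (fun m : ℝ => Real.exp (L * m) - 1) (Real.exp (L * m) * L) m :=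
      (hexpDer m).sub_const 1
    have hdiv := hnum.div hden h1.ne'
    have hinv : HasDerivAt (fun m : ℝ => m⁻¹) (-(m ^ 2)⁻¹) m := hasDerivAt_inv hm.ne'
    have h := (hdiv.const_add X).sub hinv
    refine h.congr_deriv ?_
    rw [hA2def]
    have hE : Real.exp (L * m) ≠ 0 := (Real.exp_pos _).ne'
    field_simp
    ring
  have hA2anti : StrictAntiOn A2 (Ioi 0) := by
    have hrw : ∀ m : ℝ, 0 < m →
        A2 m = (L / 2) ^ 2 * (((L / 2 * m) ^ 2)⁻¹ - (Real.sinh (L / 2 * m) ^ 2)⁻¹) := by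
      intro m hm
      have hE2 : Real.exp (L / 2 * m) ^ 2 = Real.exp (L * m) := by
        rw [sq, ← Real.exp_add]; congr 1; ring
      have h1 : (0:ℝ) < Real.exp (L * m) - 1 := by linarith [hexp1 m hm]
      have hE0 : Real.exp (L / 2 * m) ≠ 0 := (Real.exp_pos _).ne'
      have hs2 : Real.sinh (L / 2 * m) ^ 2 = (Real.exp (L * m) - 1) ^ 2 / (4 * Real.exp (L * m)) := by
        rw [Real.sinh_eq, Real.exp_neg, ← hE2]
        field_simp
        ring
      rw [hA2def]
      simp only
      rw [hs2]
      field_simp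
      ring
    intro a ha b hb hab
    have ha' : (0:ℝ) < a := ha
    have hb' : (0:ℝ) < b := hb
    rw [hrw a ha', hrw b hb']
    have hm := M_anti (show L / 2 * a ∈ Ioi (0:ℝ) by simp; positivity)
      (show L / 2 * b ∈ Ioi (0:ℝ) by simp; positivity)
      (by have : (0:ℝ) < L / 2 := by positivity
          exact (mul_lt_mul_iff_right₀ this).2 hab)
    exact (mul_lt_mul_iff_right₀ (by positivity)).2 hm
  -- the concavity setup
  set s : ℝ := (n + 1) / 2 with hsdef
  set D : ℝ → ℝ := fun d => A (s + d) - A (s - d) with hDdef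
  have hn3 : (3:ℝ) ≤ n := by rw [hn]; linarith
  have hd1pos : (0:ℝ) < (n - 1) / 2 := by linarith
  have hd2pos : (0:ℝ) < (p - q) / 2 := by linarith
  have hd2lt : (p - q) / 2 < (n - 1) / 2 := by rw [hn]; linarith
  have hDd : ∀ d : ℝ, 0 < s + d → 0 < s - d →
      HasDerivAt D (A1 (s + d) + A1 (s - d)) d := by
    intro d h1 h2
    have ha : HasDerivAt (fun d : ℝ => A (s + d)) (A1 (s + d) * 1) d := by
      have := HasDerivAt.comp d (hA (s + d) h1) ((hasDerivAt_id d).const_add s)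
      simpa [Function.comp_def] using this
    have hb : HasDerivAt (fun d : ℝ => A (s - d)) (A1 (s - d) * -1) d := by
      have := HasDerivAt.comp d (hA (s - d) h2) ((hasDerivAt_id d).const_sub s)
      simpa [Function.comp_def] using this
    have h := ha.sub hb
    refine h.congr_deriv ?_
    ring
  have hD1d : ∀ d : ℝ, 0 < s + d → 0 < s - d →
      HasDerivAt (fun d => A1 (s + d) + A1 (s - d)) (A2 (s + d) - A2 (s - d)) d := by
    intro d h1 h2
    have ha : HasDerivAt (fun d : ℝ => A1 (s + d)) (A2 (s + d) * 1) d := by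
      have := HasDerivAt.comp d (hA1' (s + d) h1) ((hasDerivAt_id d).const_add s)
      simpa [Function.comp_def] using this
    have hb : HasDerivAt (fun d : ℝ => A1 (s - d)) (A2 (s - d) * -1) d := by
      have := HasDerivAt.comp d (hA1' (s - d) h2) ((hasDerivAt_id d).const_sub s)
      simpa [Function.comp_def] using this
    have h := ha.add hb
    refine h.congr_deriv ?_
    ring
  have hsub : ∀ d : ℝ, d ∈ Ioo (-(1:ℝ)) ((n - 1) / 2) → 0 < s + d ∧ 0 < s - d := by
    intro d hd
    constructor
    · have := hd.1; rw [hsdef]; linarith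
    · have := hd.2; rw [hsdef]; linarith
  have hconc : StrictConcaveOn ℝ (Icc 0 ((n - 1) / 2)) D := by
    apply strictConcaveOn_of_deriv2_neg (convex_Icc _ _)
    · intro d hd
      have h1 : 0 < s + d := by have := hd.1; rw [hsdef]; linarith
      have h2 : 0 < s - d := by have := hd.2; rw [hsdef]; linarith
      exact ((hDd d h1 h2).differentiableAt.continuousAt).continuousWithinAt
    · intro d hd
      rw [interior_Icc] at hd
      have hdU : d ∈ Ioo (-(1:ℝ)) ((n - 1) / 2) := ⟨by linarith [hd.1], hd.2⟩
      have h1 : 0 < s + d := (hsub d hdU).1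
      have h2 : 0 < s - d := (hsub d hdU).2
      have hEq : Set.EqOn (deriv D) (fun d => A1 (s + d) + A1 (s - d))
          (Ioo (-(1:ℝ)) ((n - 1) / 2)) := by
        intro u hu
        exact (hDd u (hsub u hu).1 (hsub u hu).2).deriv
      have hev : deriv D =ᶠ[nhds d] (fun d => A1 (s + d) + A1 (s - d)) :=
        Filter.eventuallyEq_of_mem (isOpen_Ioo.mem_nhds hdU) hEq
      have h2nd : deriv (deriv D) d = A2 (s + d) - A2 (s - d) := by
        rw [hev.deriv_eq]
        exact (hD1d d h1 h2).deriv
      have : deriv^[2] D d = deriv (deriv D) d := rfl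
      rw [this, h2nd]
      have hlt : s - d < s + d := by linarith [hd.1]
      have := hA2anti (show s - d ∈ Ioi (0:ℝ) from h2) (show s + d ∈ Ioi (0:ℝ) from h1) hlt
      linarith
  -- derive contradiction
  have hD0 : D 0 = 0 := by rw [hDdef]; simp
  have hDd1 : D ((n - 1) / 2) = 0 := by
    rw [hDdef]
    simp only
    have e1' : s + (n - 1) / 2 = n := by rw [hsdef]; ring
    have e2' : s - (n - 1) / 2 = 1 := by rw [hsdef]; ring
    rw [e1', e2', cond1, sub_self]
  have hDd2 : D ((p - q) / 2) = 0 := by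
    rw [hDdef]
    simp only
    have e1' : s + (p - q) / 2 = p + 1 := by rw [hsdef, hn]; ring
    have e2' : s - (p - q) / 2 = q + 1 := by rw [hsdef, hn]; ring
    rw [e1', e2', cond2, sub_self]
  have hmem0 : (0:ℝ) ∈ Icc (0:ℝ) ((n - 1) / 2) := ⟨le_refl _, le_of_lt hd1pos⟩
  have hmem1 : (n - 1) / 2 ∈ Icc (0:ℝ) ((n - 1) / 2) := ⟨le_of_lt hd1pos, le_refl _⟩
  have hne : (0:ℝ) ≠ (n - 1) / 2 := ne_of_lt hd1pos
  set b : ℝ := ((p - q) / 2) / ((n - 1) / 2) with hbdef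
  have hb0 : 0 < b := div_pos hd2pos hd1pos
  have hb1 : b < 1 := (div_lt_one hd1pos).2 hd2lt
  have ha0 : 0 < 1 - b := by linarith
  have hsum : (1 - b) + b = 1 := by ring
  have hkey := hconc.2 hmem0 hmem1 hne ha0 hb0 hsum
  rw [hD0, hDd1] at hkey
  have hpt : (1 - b) • (0:ℝ) + b • ((n - 1) / 2) = (p - q) / 2 := by
    have hn1 : n - 1 ≠ 0 := by linarith
    rw [smul_eq_mul, smul_eq_mul, hbdef]
    field_simp
    ring
  rw [hpt, hDd2] at hkey
  simp at hkey
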